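/- arXiv:1705.06534 — 4 statements merged into one kernel-verified Lean document; each statement's English description precedes it below -/
import Mathlib

section
/- If U is a unitary m×m matrix and ε is a skew-symmetric unitary matrix such that Uᵀ ε = ε U, and U = exp(iT) with T self-adjoint and spectrum of T contained in (-π, π], then Tᵀ ε = ε T. -/
open Complex Matrix Polynomial

noncomputable section
namespace PrincipalLogAux

variable {m : ℕ}

lemma aeval_unitary_conj (V M : Matrix (Fin m) (Fin m) ℂ)
    (hV : V ∈ Matrix.unitaryGroup (Fin m) ℂ) (p : ℂ[X]) :
    aeval (V * M * star V) p = V * aeval M p * star V := by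
  have h1 : V * star V = 1 := Matrix.mem_unitaryGroup_iff.mp hV
  have h2 : star V * V = 1 := Matrix.mem_unitaryGroup_iff'.mp hV
  have hcancel : ∀ x : Matrix (Fin m) (Fin m) ℂ, star V * (V * x) = x := fun x => by
    rw [← mul_assoc, h2, one_mul]
  induction p using Polynomial.induction_on' with
  | add p q hp hq => simp [map_add, hp, hq, Matrix.mul_add, Matrix.add_mul]
  | monomial n a =>
    have hpow : ∀ k : ℕ, (V * M * star V) ^ k = V * M ^ k * star V := by
      intro k
      induction k with
      | zero => simpa using h1.symm
      | succ k ih =>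
        rw [pow_succ, ih, pow_succ]
        simp only [mul_assoc, hcancel]
    simp [aeval_monomial, hpow, Algebra.algebraMap_eq_smul_one, smul_mul_assoc,
      mul_smul_comm]

lemma aeval_diagonal (d : Fin m → ℂ) (p : ℂ[X]) :
    aeval (Matrix.diagonal d) p = Matrix.diagonal (fun i => p.eval (d i)) := by
  have h : aeval (Matrix.diagonalAlgHom (n := Fin m) (α := ℂ) ℂ d) p
      = Matrix.diagonalAlgHom (n := Fin m) (α := ℂ) ℂ (aeval d p) :=
    Polynomial.aeval_algHom_apply _ d p
  have h2 : (fun i => (aeval d p) i) = fun i => p.eval (d i) := by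
    funext i
    have h3 := Polynomial.aeval_algHom_apply (Pi.evalAlgHom ℂ (fun _ : Fin m => ℂ) i) d p
    simp only [Pi.evalAlgHom_apply] at h3
    rw [← h3, Polynomial.aeval_def, Polynomial.eval₂_eq_eval_map, Algebra.algebraMap_self, Polynomial.map_id]
  calc aeval (Matrix.diagonal d) p = Matrix.diagonal (fun i => (aeval d p) i) := h
  _ = _ := by rw [h2]

lemma exp_xI_injOn :
    Set.InjOn (fun x : ℝ => Complex.exp ((x : ℂ) * Complex.I))
      (Set.Ioc (-Real.pi) Real.pi) := by
  intro x hx y hy hxy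
  obtain ⟨n, hn⟩ := Complex.exp_eq_exp_iff_exists_int.mp hxy
  have hI : (x : ℂ) = (y : ℂ) + n * (2 * Real.pi) := by
    have : (x : ℂ) * I = ((y : ℂ) + n * (2 * Real.pi)) * I := by
      rw [hn]; ring
    exact mul_right_cancel₀ Complex.I_ne_zero this
  have hR : x = y + n * (2 * Real.pi) := by exact_mod_cast hI
  have hn0 : n = 0 := by
    have h1 : (-1 : ℝ) < (n : ℝ) := by nlinarith [Real.pi_pos, hx.1, hx.2, hy.1, hy.2]
    have h2 : (n : ℝ) < 1 := by nlinarith [Real.pi_pos, hx.1, hx.2, hy.1, hy.2]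
    have h1' : (-1 : ℤ) < n := by exact_mod_cast h1
    have h2' : n < (1 : ℤ) := by exact_mod_cast h2
    omega
  rw [hn0] at hR
  simpa using hR

lemma recover (A : Matrix (Fin m) (Fin m) ℂ) (hA : A.IsHermitian)
    (s : Finset ℝ) (hs : ∀ x ∈ s, x ∈ Set.Ioc (-Real.pi) Real.pi)
    (hmem : ∀ i, hA.eigenvalues i ∈ s) :
    aeval (NormedSpace.exp (Complex.I • A))
      (Lagrange.interpolate s (fun x : ℝ => Complex.exp ((x : ℂ) * Complex.I))
        (fun x : ℝ => (x : ℂ))) = A := by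
  set V : Matrix (Fin m) (Fin m) ℂ := (hA.eigenvectorUnitary : Matrix (Fin m) (Fin m) ℂ) with hVdef
  have hV : V ∈ Matrix.unitaryGroup (Fin m) ℂ := hA.eigenvectorUnitary.2
  have h1 : V * star V = 1 := Matrix.mem_unitaryGroup_iff.mp hV
  have h2 : star V * V = 1 := Matrix.mem_unitaryGroup_iff'.mp hV
  have hVunit : IsUnit V := ⟨Unitary.toUnits (⟨V, hV⟩ : Matrix.unitaryGroup (Fin m) ℂ), rfl⟩
  have hVinv : V⁻¹ = star V := Matrix.inv_eq_left_inv h2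
  have hexp : NormedSpace.exp (Complex.I • A)
      = V * Matrix.diagonal (fun i => Complex.exp ((hA.eigenvalues i : ℂ) * Complex.I))
        * star V := by
    conv_lhs => rw [hA.spectral_theorem, Unitary.conjStarAlgAut_apply]
    have hsmul : Complex.I • (V * Matrix.diagonal (RCLike.ofReal ∘ hA.eigenvalues) * star V)
        = V * (Complex.I • Matrix.diagonal (RCLike.ofReal ∘ hA.eigenvalues)) * star V := by
      rw [mul_smul_comm, smul_mul_assoc]
    rw [hsmul, ← hVinv, Matrix.exp_conj V _ hVunit, hVinv]
    have hd : Complex.I • Matrix.diagonal (RCLike.ofReal ∘ hA.eigenvalues)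
        = Matrix.diagonal (Complex.I • (RCLike.ofReal ∘ hA.eigenvalues) : Fin m → ℂ) := by
      rw [Matrix.diagonal_smul]
    have hfun : NormedSpace.exp (Complex.I • (RCLike.ofReal ∘ hA.eigenvalues) : Fin m → ℂ)
        = fun i => Complex.exp ((hA.eigenvalues i : ℂ) * Complex.I) := by
      funext i
      rw [Pi.coe_exp, ← Complex.exp_eq_exp_ℂ]
      simp [mul_comm]
    rw [hd, Matrix.exp_diagonal, hfun]
  rw [hexp, aeval_unitary_conj _ _ hV, aeval_diagonal]
  have hev : (fun i => Polynomial.eval (Complex.exp ((hA.eigenvalues i : ℂ) * Complex.I))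
        (Lagrange.interpolate s (fun x : ℝ => Complex.exp ((x : ℂ) * Complex.I))
          (fun x : ℝ => (x : ℂ))))
      = fun i => ((hA.eigenvalues i : ℝ) : ℂ) := by
    funext i
    exact Lagrange.eval_interpolate_at_node (fun x : ℝ => (x : ℂ))
      (exp_xI_injOn.mono fun x hx => hs x (Finset.mem_coe.mp hx)) (hmem i)
  rw [hev]
  conv_rhs => rw [hA.spectral_theorem]
  rfl

lemma herm_exp_inj (A B : Matrix (Fin m) (Fin m) ℂ)
    (hA : A.IsHermitian) (hB : B.IsHermitian)
    (hAs : ∀ i, hA.eigenvalues i ∈ Set.Ioc (-Real.pi) Real.pi)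
    (hBs : ∀ i, hB.eigenvalues i ∈ Set.Ioc (-Real.pi) Real.pi)
    (h : NormedSpace.exp (Complex.I • A) = NormedSpace.exp (Complex.I • B)) :
    A = B := by
  classical
  set s : Finset ℝ := Finset.image hA.eigenvalues Finset.univ ∪
    Finset.image hB.eigenvalues Finset.univ with hsdef
  have hs : ∀ x ∈ s, x ∈ Set.Ioc (-Real.pi) Real.pi := by
    intro x hx
    rw [hsdef, Finset.mem_union] at hx
    rcases hx with hx | hx <;> obtain ⟨i, -, rfl⟩ := Finset.mem_image.mp hx
    · exact hAs i
    · exact hBs i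
  have hmemA : ∀ i, hA.eigenvalues i ∈ s := fun i => by
    rw [hsdef, Finset.mem_union]; exact Or.inl (Finset.mem_image_of_mem _ (Finset.mem_univ i))
  have hmemB : ∀ i, hB.eigenvalues i ∈ s := fun i => by
    rw [hsdef, Finset.mem_union]; exact Or.inr (Finset.mem_image_of_mem _ (Finset.mem_univ i))
  have hrA := recover A hA s hs hmemA
  have hrB := recover B hB s hs hmemB
  rw [h] at hrA
  rw [← hrA, hrB]

lemma spectrum_transpose (M : Matrix (Fin m) (Fin m) ℂ) :
    spectrum ℂ Mᵀ = spectrum ℂ M := by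
  ext z
  have key : ∀ N : Matrix (Fin m) (Fin m) ℂ, IsUnit Nᵀ ↔ IsUnit N := fun N => by
    rw [Matrix.isUnit_iff_isUnit_det, Matrix.isUnit_iff_isUnit_det, Matrix.det_transpose]
  have heq : algebraMap ℂ (Matrix (Fin m) (Fin m) ℂ) z - Mᵀ
      = (algebraMap ℂ (Matrix (Fin m) (Fin m) ℂ) z - M)ᵀ := by
    rw [Matrix.transpose_sub, Algebra.algebraMap_eq_smul_one, Matrix.transpose_smul,
      Matrix.transpose_one, ← Algebra.algebraMap_eq_smul_one]
  simp only [spectrum.mem_iff, heq, key]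

lemma eig_mem {A : Matrix (Fin m) (Fin m) ℂ} (hA : A.IsHermitian)
    (hspec : ∀ z ∈ spectrum ℂ A, ∃ x : ℝ, x ∈ Set.Ioc (-Real.pi) Real.pi ∧ z = (x : ℂ)) (i : Fin m) :
    hA.eigenvalues i ∈ Set.Ioc (-Real.pi) Real.pi := by
  have h1 := hA.eigenvalues_mem_spectrum_real i
  have h2 : ((hA.eigenvalues i : ℝ) : ℂ) ∈ spectrum ℂ A :=
    (spectrum.algebraMap_mem_iff ℂ).mpr h1
  obtain ⟨x, hx, hxe⟩ := hspec _ h2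
  have : hA.eigenvalues i = x := by exact_mod_cast hxe
  rwa [this]

end PrincipalLogAux
end

open PrincipalLogAux

/-- If `U = exp(iT)` is unitary with `T` self-adjoint and `σ(T) ⊆ (-π, π]`, `ε` is a
skew-symmetric unitary matrix, and `Uᵀ ε = ε U`, then `Tᵀ ε = ε T`. -/
theorem principal_log_inherits_symmetry {m : ℕ}
    (ε T : Matrix (Fin m) (Fin m) ℂ)
    (hεu : ε ∈ Matrix.unitaryGroup (Fin m) ℂ) (hεskew : εᵀ = -ε)
    (hT : T.IsHermitian)
    (hspec : ∀ z ∈ spectrum ℂ T, ∃ x : ℝ, x ∈ Set.Ioc (-Real.pi) Real.pi ∧ z = (x : ℂ))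
    (hUunit : NormedSpace.exp (Complex.I • T) ∈ Matrix.unitaryGroup (Fin m) ℂ)
    (hUε : (NormedSpace.exp (Complex.I • T))ᵀ * ε = ε * NormedSpace.exp (Complex.I • T)) :
    Tᵀ * ε = ε * T := by
  have h1 : ε * star ε = 1 := Matrix.mem_unitaryGroup_iff.mp hεu
  have h2 : star ε * ε = 1 := Matrix.mem_unitaryGroup_iff'.mp hεu
  have hεunit : IsUnit ε := ⟨Unitary.toUnits (⟨ε, hεu⟩ : Matrix.unitaryGroup (Fin m) ℂ), rfl⟩
  have hεinv : ε⁻¹ = star ε := Matrix.inv_eq_left_inv h2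
  set S : Matrix (Fin m) (Fin m) ℂ := star ε * Tᵀ * ε with hSdef
  have hTt : (Tᵀ).IsHermitian := hT.transpose
  have hS : S.IsHermitian := by
    have := Matrix.isHermitian_mul_mul_conjTranspose (εᴴ) hTt
    simpa [hSdef, Matrix.conjTranspose_conjTranspose, Matrix.star_eq_conjTranspose] using this
  have hspecS : spectrum ℂ S = spectrum ℂ T := by
    have hu : spectrum ℂ ((star (⟨ε, hεu⟩ : Matrix.unitaryGroup (Fin m) ℂ) :
        Matrix (Fin m) (Fin m) ℂ) * Tᵀ * (⟨ε, hεu⟩ : Matrix.unitaryGroup (Fin m) ℂ))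
        = spectrum ℂ Tᵀ := Unitary.spectrum_star_left_conjugate
    rw [hSdef]
    calc spectrum ℂ (star ε * Tᵀ * ε) = spectrum ℂ Tᵀ := hu
    _ = spectrum ℂ T := spectrum_transpose T
  have hexpS : NormedSpace.exp (Complex.I • S) = NormedSpace.exp (Complex.I • T) := by
    have hsm : Complex.I • S = star ε * (Complex.I • Tᵀ) * ε := by
      rw [hSdef, mul_smul_comm, smul_mul_assoc]
    rw [hsm, ← hεinv, Matrix.exp_conj' ε _ hεunit, hεinv]
    have hTtr : NormedSpace.exp (Complex.I • Tᵀ) = (NormedSpace.exp (Complex.I • T))ᵀ := by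
      rw [← Matrix.transpose_smul, Matrix.exp_transpose]
    rw [hTtr, mul_assoc, hUε, ← mul_assoc, h2, one_mul]
  have hST : S = T := herm_exp_inj S T hS hT
    (eig_mem hS (fun z hz => hspec z (hspecS ▸ hz)))
    (eig_mem hT hspec) hexpS
  have := congrArg (fun M => ε * M) hST
  simp only [hSdef, ← mul_assoc, h1, one_mul] at this
  exact this
end

section
/- Every skew-symmetric unitary matrix ε ∈ U(2n) can be written as ε = W J Wᵀ for some unitary W, where J is the standard symplectic form (block diagonal with n copies of [[0,1],[-1,0]]). -/
open Matrix

/-- The standard symplectic form on `ℂ^{2n}`: block-diagonal with `n` copies of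
`[[0, 1], [-1, 0]]`. -/
def stdSymplecticJ (n : ℕ) : Matrix (Fin (2*n)) (Fin (2*n)) ℂ := fun i j =>
  if j.val = i.val + 1 ∧ i.val % 2 = 0 then 1
  else if i.val = j.val + 1 ∧ j.val % 2 = 0 then -1
  else 0

open Module Submodule
open scoped InnerProductSpace

private lemma sum3 {α : Type*} [AddCommMonoid α] {N : ℕ} (f : Fin N → Fin N → Fin N → α) :
    ∑ i, ∑ k, ∑ l, f i k l = ∑ k, ∑ l, ∑ i, f i k l := by
  rw [Finset.sum_comm]
  exact Finset.sum_congr rfl fun k _ => Finset.sum_comm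

private lemma sum3' {α : Type*} [AddCommMonoid α] {N : ℕ} (f : Fin N → Fin N → Fin N → α) :
    ∑ i, ∑ k, ∑ l, f i k l = ∑ l, ∑ k, ∑ i, f i k l := by
  rw [sum3]
  exact Finset.sum_comm

noncomputable def jmapM {N : ℕ} (ε : Matrix (Fin N) (Fin N) ℂ)
    (x : EuclideanSpace ℂ (Fin N)) : EuclideanSpace ℂ (Fin N) :=
  WithLp.toLp 2 (ε.mulVec (fun i => starRingEnd ℂ (x i)) : Fin N → ℂ)

lemma jmapM_apply {N : ℕ} (ε : Matrix (Fin N) (Fin N) ℂ) (x : EuclideanSpace ℂ (Fin N))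
    (i : Fin N) : jmapM ε x i = ∑ k, ε i k * starRingEnd ℂ (x k) := by
  simp [jmapM, mulVec, dotProduct]

lemma jmapM_neg {N : ℕ} (ε : Matrix (Fin N) (Fin N) ℂ) (x : EuclideanSpace ℂ (Fin N)) :
    jmapM ε (-x) = -(jmapM ε x) := by
  ext i
  show jmapM ε (-x) i = -(jmapM ε x i)
  simp only [jmapM_apply]
  rw [← Finset.sum_neg_distrib]
  refine Finset.sum_congr rfl fun k _ => ?_
  have : (-x) k = -(x k) := rfl
  rw [this, map_neg, mul_neg]

lemma jmapM_jmapM {N : ℕ} (ε : Matrix (Fin N) (Fin N) ℂ)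
    (h : ε * ε.map (starRingEnd ℂ) = -1) (x : EuclideanSpace ℂ (Fin N)) :
    jmapM ε (jmapM ε x) = -x := by
  ext i
  show jmapM ε (jmapM ε x) i = -(x i)
  calc jmapM ε (jmapM ε x) i
      = ∑ k, ε i k * starRingEnd ℂ (∑ l, ε k l * starRingEnd ℂ (x l)) := by
        simp [jmapM_apply]
    _ = ∑ k, ∑ l, ε i k * starRingEnd ℂ (ε k l) * x l := by
        refine Finset.sum_congr rfl fun k _ => ?_
        rw [map_sum, Finset.mul_sum]
        refine Finset.sum_congr rfl fun l _ => ?_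
        rw [_root_.map_mul, Complex.conj_conj]
        ring
    _ = ∑ l, (∑ k, ε i k * starRingEnd ℂ (ε k l)) * x l := by
        rw [Finset.sum_comm]
        exact Finset.sum_congr rfl fun l _ => (Finset.sum_mul _ _ _).symm
    _ = ∑ l, ((ε * ε.map (starRingEnd ℂ)) i l) * x l := by
        simp [Matrix.mul_apply, Matrix.map_apply]
    _ = ∑ l, (-(1 : Matrix (Fin N) (Fin N) ℂ)) i l * x l := by rw [h]
    _ = -(x i) := by
        simp [Matrix.neg_apply, Matrix.one_apply, ite_mul]

lemma jmapM_inner {N : ℕ} (ε : Matrix (Fin N) (Fin N) ℂ)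
    (h : εᴴ * ε = 1) (x y : EuclideanSpace ℂ (Fin N)) :
    ⟪jmapM ε x, jmapM ε y⟫_ℂ = ⟪y, x⟫_ℂ := by
  calc ⟪jmapM ε x, jmapM ε y⟫_ℂ
      = ∑ i, (∑ k, starRingEnd ℂ (ε i k) * x k) * (∑ l, ε i l * starRingEnd ℂ (y l)) := by
        simp only [PiLp.inner_apply, RCLike.inner_apply', jmapM_apply, map_sum]
        refine Finset.sum_congr rfl fun i _ => ?_
        congr 1
        refine Finset.sum_congr rfl fun k _ => ?_
        rw [_root_.map_mul, Complex.conj_conj]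
    _ = ∑ k, ∑ l, (∑ i, starRingEnd ℂ (ε i k) * ε i l) * (x k * starRingEnd ℂ (y l)) := by
        simp only [Finset.sum_mul, Finset.mul_sum]
        rw [sum3' (fun a b c => starRingEnd ℂ (ε a c) * x c * (ε a b * starRingEnd ℂ (y b)))]
        exact Finset.sum_congr rfl fun k _ => Finset.sum_congr rfl fun l _ =>
          Finset.sum_congr rfl fun i _ => by ring
    _ = ∑ k, ∑ l, ((εᴴ * ε) k l) * (x k * starRingEnd ℂ (y l)) := by
        refine Finset.sum_congr rfl fun k _ => Finset.sum_congr rfl fun l _ => ?_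
        simp only [Matrix.mul_apply, Matrix.conjTranspose_apply, starRingEnd_apply]
    _ = ∑ k, x k * starRingEnd ℂ (y k) := by
        rw [h]
        simp only [Matrix.one_apply, ite_mul, one_mul, zero_mul, Finset.sum_ite_eq,
          Finset.mem_univ, if_true]
    _ = ⟪y, x⟫_ℂ := by
        simp only [PiLp.inner_apply, RCLike.inner_apply']
        exact Finset.sum_congr rfl fun k _ => by ring


lemma exists_adapted {E : Type*} [NormedAddCommGroup E] [InnerProductSpace ℂ E]
    [FiniteDimensional ℂ E] (j : E → E) (hj2 : ∀ x, j (j x) = -x)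
    (hja : ∀ x y, ⟪j x, j y⟫_ℂ = ⟪y, x⟫_ℂ) :
    ∀ (m : ℕ) (S : Submodule ℂ E), (∀ x ∈ S, j x ∈ S) → finrank ℂ S = 2*m →
    ∃ f : Fin m → E, (∀ k, f k ∈ S) ∧ (∀ k l, ⟪f k, f l⟫_ℂ = if k = l then 1 else 0)
      ∧ (∀ k l, ⟪f k, j (f l)⟫_ℂ = 0) := by
  have hjx0 : ∀ y, ⟪j y, y⟫_ℂ = 0 := by
    intro y
    have h1 := hja y (j y)
    rw [hj2, inner_neg_right] at h1
    linear_combination (-1/2 : ℂ) * h1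
  have hxj0 : ∀ y, ⟪y, j y⟫_ℂ = 0 := fun y => by
    rw [← inner_conj_symm, hjx0, map_zero]
  intro m
  induction m with
  | zero =>
    intro S _ _
    exact ⟨Fin.elim0, fun k => k.elim0, fun k => k.elim0, fun k => k.elim0⟩
  | succ m ih =>
    intro S hS hrank
    obtain ⟨x, hxS, hx0⟩ : ∃ x ∈ S, x ≠ 0 := by
      by_contra h
      push_neg at h
      have hbot : S = ⊥ := (Submodule.eq_bot_iff S).2 h
      rw [hbot, finrank_bot] at hrank
      omega
    have hxn : (‖x‖ : ℂ) ≠ 0 := by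
      simpa using norm_ne_zero_iff.2 hx0
    set u : E := ((‖x‖ : ℂ))⁻¹ • x with hu
    have huS : u ∈ S := S.smul_mem _ hxS
    have huu : ⟪u, u⟫_ℂ = 1 := by
      rw [hu, inner_smul_left, inner_smul_right, inner_self_eq_norm_sq_to_K,
        map_inv₀, Complex.conj_ofReal]
      field_simp
      rfl
    set v : E := j u with hv
    have hvS : v ∈ S := hS u huS
    have hvv : ⟪v, v⟫_ℂ = 1 := by rw [hv, hja]; exact huu
    have huv : ⟪u, v⟫_ℂ = 0 := hxj0 u
    have hvu : ⟪v, u⟫_ℂ = 0 := hjx0 u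
    set b2 : Fin 2 → E := ![u, v] with hb2
    have horth : Orthonormal ℂ b2 := by
      rw [orthonormal_iff_ite]
      intro i k
      fin_cases i <;> fin_cases k <;>
        simp [hb2, huu, hvv, huv, hvu, -inner_self_eq_norm_sq_to_K]
    set K : Submodule ℂ E := Submodule.span ℂ (Set.range b2) with hK
    have hKS : K ≤ S := by
      rw [hK, Submodule.span_le]
      rintro _ ⟨i, rfl⟩
      fin_cases i <;> simpa [hb2]
    have hK2 : finrank ℂ K = 2 := by
      rw [hK, finrank_span_eq_card horth.linearIndependent]
      simp
    have huK : u ∈ K := Submodule.subset_span ⟨0, rfl⟩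
    have hvK : v ∈ K := Submodule.subset_span ⟨1, rfl⟩
    set T : Submodule ℂ E := Kᗮ ⊓ S with hT
    have hsum := Submodule.finrank_add_inf_finrank_orthogonal hKS
    have hTrank : finrank ℂ T = 2*m := by
      rw [hK2] at hsum
      rw [hT]
      omega
    have hTKp : T ≤ Kᗮ := inf_le_left
    have hTS : T ≤ S := inf_le_right
    -- orthogonality of K elements to T elements
    have hKT : ∀ w ∈ K, ∀ t ∈ T, ⟪w, t⟫_ℂ = 0 := by
      intro w hw t ht
      exact (Submodule.mem_orthogonal K t).1 (hTKp ht) w hw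
    have hTK0 : ∀ t ∈ T, ∀ w ∈ K, ⟪t, w⟫_ℂ = 0 := by
      intro t ht w hw
      rw [← inner_conj_symm, hKT w hw t ht, map_zero]
    -- T is j-invariant
    have hTj : ∀ z ∈ T, j z ∈ T := by
      intro z hz
      rw [hT, Submodule.mem_inf]
      refine ⟨?_, hS z (hTS hz)⟩
      rw [Submodule.mem_orthogonal]
      intro w hw
      have hgen : ∀ i : Fin 2, ⟪b2 i, j z⟫_ℂ = 0 := by
        intro i
        fin_cases i
        · -- ⟪u, j z⟫ = 0 ; u = -(j v)
          have hujv : u = -(j v) := by rw [hv, hj2, neg_neg]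
          show ⟪u, j z⟫_ℂ = 0
          rw [hujv, inner_neg_left, hja]
          rw [hTK0 z hz v hvK]
          simp
        · show ⟪v, j z⟫_ℂ = 0
          rw [hv, hja]
          exact hTK0 z hz u huK
      refine Submodule.span_induction ?_ ?_ ?_ ?_ hw
      · rintro _ ⟨i, rfl⟩; exact hgen i
      · exact inner_zero_left _
      · intro a b _ _ ha hb
        rw [inner_add_left, ha, hb, add_zero]
      · intro c a _ ha
        rw [inner_smul_left, ha, mul_zero]
    obtain ⟨f', hf'T, hf'A, hf'B⟩ := ih T hTj hTrank
    refine ⟨Fin.cons u f', ?_, ?_, ?_⟩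
    · intro k
      refine Fin.cases ?_ ?_ k
      · exact huS
      · intro k'; exact hTS (hf'T k')
    · intro k l
      refine Fin.cases ?_ ?_ k <;> [skip; intro k'] <;> refine Fin.cases ?_ ?_ l
      · simpa using huu
      · intro l'
        simp only [Fin.cons_zero, Fin.cons_succ]
        rw [hKT u huK _ (hf'T l'), if_neg (Fin.succ_ne_zero l').symm]
      · simp only [Fin.cons_zero, Fin.cons_succ]
        rw [hTK0 _ (hf'T k') u huK, if_neg (Fin.succ_ne_zero k')]
      · intro l'
        simp only [Fin.cons_succ]
        rw [hf'A k' l']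
        simp [Fin.succ_inj]
    · intro k l
      refine Fin.cases ?_ ?_ k <;> [skip; intro k'] <;> refine Fin.cases ?_ ?_ l
      · simpa using hxj0 u
      · intro l'
        simp only [Fin.cons_zero, Fin.cons_succ]
        exact hKT u huK _ (hTj _ (hf'T l'))
      · simp only [Fin.cons_zero, Fin.cons_succ]
        exact hTK0 _ (hf'T k') v hvK
      · intro l'
        simp only [Fin.cons_succ]
        exact hf'B k' l'


/-- Hua's normal form: every skew-symmetric unitary matrix `ε ∈ U(2n)` can be written as
`ε = W J Wᵀ` for some unitary `W`, with `J` the standard symplectic form. -/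
theorem skew_symmetric_unitary_normal_form (n : ℕ)
    (ε : Matrix (Fin (2*n)) (Fin (2*n)) ℂ)
    (hε : ε ∈ Matrix.unitaryGroup (Fin (2*n)) ℂ) (hskew : εᵀ = -ε) :
    ∃ W ∈ Matrix.unitaryGroup (Fin (2*n)) ℂ, ε = W * stdSymplecticJ n * Wᵀ := by
  classical
  have hcc : εᴴ * ε = 1 := by
    rw [← Matrix.star_eq_conjTranspose]
    exact Matrix.mem_unitaryGroup_iff'.1 hε
  have hstar : εᴴ = -(ε.map (starRingEnd ℂ)) := by
    ext i k
    have h2 : ε k i = -(ε i k) := by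
      have := congrFun (congrFun hskew i) k
      simpa [Matrix.transpose_apply, Matrix.neg_apply] using this
    simp only [Matrix.conjTranspose_apply, Matrix.map_apply, Matrix.neg_apply, starRingEnd_apply]
    rw [h2, star_neg]
  have hmm : ε * ε.map (starRingEnd ℂ) = -1 := by
    have h1 : ε * εᴴ = 1 := by
      rw [← Matrix.star_eq_conjTranspose]
      exact Matrix.mem_unitaryGroup_iff.1 hε
    rw [hstar, Matrix.mul_neg] at h1
    exact neg_eq_iff_eq_neg.1 (by rw [h1])
  obtain ⟨f, hfmem, hA, hB⟩ := exists_adapted (jmapM ε) (jmapM_jmapM ε hmm) (jmapM_inner ε hcc)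
    n ⊤ (fun x _ => Submodule.mem_top)
    (by rw [finrank_top]; simp [finrank_euclideanSpace])
  have hB' : ∀ k l, ⟪jmapM ε (f k), f l⟫_ℂ = 0 := fun k l => by
    rw [← inner_conj_symm, hB, map_zero]
  have hBB : ∀ k l, ⟪jmapM ε (f k), jmapM ε (f l)⟫_ℂ = if l = k then 1 else 0 := fun k l => by
    rw [jmapM_inner ε hcc, hA]
  have hJJ : ∀ k, jmapM ε (jmapM ε (f k)) = -(f k) := fun k => jmapM_jmapM ε hmm _
  have hhalf : ∀ i : Fin (2*n), i.val / 2 < n := fun i => by have := i.isLt; omega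
  set b : Fin (2*n) → EuclideanSpace ℂ (Fin (2*n)) := fun i =>
    if i.val % 2 = 0 then f ⟨i.val/2, hhalf i⟩ else -(jmapM ε (f ⟨i.val/2, hhalf i⟩)) with hbdef
  have hbb : ∀ i k, ⟪b i, b k⟫_ℂ = if i = k then 1 else 0 := by
    intro i k
    by_cases hi : i.val % 2 = 0 <;> by_cases hk : k.val % 2 = 0 <;> simp only [hbdef]
    · rw [if_pos hi, if_pos hk, hA]
      by_cases h : i = k
      · rw [if_pos (by rw [h]), if_pos h]
      · rw [if_neg (fun hc => h (by have := Fin.mk_eq_mk.1 hc; rw [Fin.ext_iff]; omega)),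
          if_neg h]
    · rw [if_pos hi, if_neg hk, inner_neg_right, hB, neg_zero,
        if_neg (fun h => hk (by rw [← h]; exact hi))]
    · rw [if_neg hi, if_pos hk, inner_neg_left, hB', neg_zero,
        if_neg (fun h => hi (by rw [h]; exact hk))]
    · rw [if_neg hi, if_neg hk, inner_neg_neg, hBB]
      by_cases h : i = k
      · rw [if_pos (by rw [h]), if_pos h]
      · rw [if_neg (fun hc => h (by have := Fin.mk_eq_mk.1 hc; rw [Fin.ext_iff]; omega)),
          if_neg h]
  have hbj : ∀ i k, ⟪b i, jmapM ε (b k)⟫_ℂ = stdSymplecticJ n i k := by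
    intro i k
    by_cases hi : i.val % 2 = 0 <;> by_cases hk : k.val % 2 = 0 <;>
      simp only [hbdef, stdSymplecticJ]
    · rw [if_pos hi, if_pos hk, hB, if_neg (by omega), if_neg (by omega)]
    · rw [if_pos hi, if_neg hk, jmapM_neg, hJJ, neg_neg, hA]
      by_cases h : k.val = i.val + 1
      · rw [if_pos (Fin.mk_eq_mk.2 (by omega)), if_pos ⟨h, hi⟩]
      · rw [if_neg (fun hc => h (by have := Fin.mk_eq_mk.1 hc; omega)),
          if_neg (fun hc => h hc.1), if_neg (by omega)]
    · rw [if_neg hi, if_pos hk, inner_neg_left, hBB]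
      by_cases h : i.val = k.val + 1
      · rw [if_pos (Fin.mk_eq_mk.2 (by omega)), if_neg (by omega), if_pos ⟨h, hk⟩]
      · rw [if_neg (fun hc => h (by have := Fin.mk_eq_mk.1 hc; omega)), neg_zero,
          if_neg (by omega), if_neg (fun hc => h hc.1)]
    · rw [if_neg hi, if_neg hk, jmapM_neg, hJJ, neg_neg, inner_neg_left, hB', neg_zero,
        if_neg (by omega), if_neg (by omega)]
  set W : Matrix (Fin (2*n)) (Fin (2*n)) ℂ := Matrix.of (fun i k => b k i) with hWdef
  have hWmem : W ∈ Matrix.unitaryGroup (Fin (2*n)) ℂ := by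
    rw [Matrix.mem_unitaryGroup_iff']
    ext i k
    have h1 : (star W * W) i k = ⟪b i, b k⟫_ℂ := by
      simp only [Matrix.mul_apply, Matrix.star_apply, hWdef, Matrix.of_apply,
        PiLp.inner_apply, RCLike.inner_apply', starRingEnd_apply]
    rw [h1, hbb, Matrix.one_apply]
  have hkey : star W * ε * W.map (starRingEnd ℂ) = stdSymplecticJ n := by
    ext i k
    rw [← hbj i k]
    calc (star W * ε * W.map (starRingEnd ℂ)) i k
        = ∑ l, (∑ m, starRingEnd ℂ (b i m) * ε m l) * starRingEnd ℂ (b k l) := by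
          simp only [Matrix.mul_apply, Matrix.map_apply, Matrix.star_apply, hWdef,
            Matrix.of_apply, starRingEnd_apply]
      _ = ∑ m, starRingEnd ℂ (b i m) * (∑ l, ε m l * starRingEnd ℂ (b k l)) := by
          simp only [Finset.sum_mul, Finset.mul_sum]
          rw [Finset.sum_comm]
          exact Finset.sum_congr rfl fun m _ => Finset.sum_congr rfl fun l _ => by ring
      _ = ⟪b i, jmapM ε (b k)⟫_ℂ := by
          simp only [PiLp.inner_apply, RCLike.inner_apply', jmapM_apply, starRingEnd_apply]
  have hW1 : W * star W = 1 := Matrix.mem_unitaryGroup_iff.1 hWmem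
  have hW4 : W.map (starRingEnd ℂ) * Wᵀ = 1 := by
    have h2 : star W * W = 1 := Matrix.mem_unitaryGroup_iff'.1 hWmem
    have h3 := congrArg Matrix.transpose h2
    rw [Matrix.transpose_mul, Matrix.transpose_one] at h3
    rw [show (star W)ᵀ = W.map (starRingEnd ℂ) from by
      ext i k
      simp only [Matrix.transpose_apply, Matrix.star_apply, Matrix.map_apply,
        starRingEnd_apply]] at h3
    exact mul_eq_one_comm.1 h3
  refine ⟨W, hWmem, ?_⟩
  calc ε = (W * star W) * ε * (W.map (starRingEnd ℂ) * Wᵀ) := by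
        rw [hW1, hW4, one_mul, mul_one]
    _ = W * (star W * ε * W.map (starRingEnd ℂ)) * Wᵀ := by
        simp only [Matrix.mul_assoc]
    _ = W * stdSymplecticJ n * Wᵀ := by rw [hkey]
end

section
/- If Θ is an antiunitary operator on a finite-dimensional complex Hilbert space with Θ² = -1, and P is an orthogonal projection commuting with Θ in the sense ΘPΘ⁻¹ = P, then the rank of P is even. -/
open Module

/-- Auxiliary: a finite-dimensional complex inner product space admitting an
antiunitary `J` with `J² = -1` has even dimension. -/
lemma even_finrank_of_quaternionic (n : ℕ) :
    ∀ (V : Type*) [NormedAddCommGroup V] [InnerProductSpace ℂ V] [FiniteDimensional ℂ V]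
      (J : V →ₗ⋆[ℂ] V),
      (∀ x y : V, (inner ℂ (J x) (J y) : ℂ) = inner ℂ y x) →
      (∀ x, J (J x) = -x) →
      finrank ℂ V = n → Even n := by
  induction n using Nat.strong_induction_on with
  | _ n ih =>
    intro V _ _ _ J hJinner hJ2 hrank
    rcases Nat.eq_zero_or_pos n with h0 | hpos
    · simp [h0]
    · have hnt : Nontrivial V := by
        rw [← finrank_pos_iff (R := ℂ)]; omega
      obtain ⟨x, hx⟩ := exists_ne (0 : V)
      have hJx : J x ≠ 0 := by
        intro h
        apply hx
        have := hJ2 x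
        rw [h, map_zero] at this
        exact (neg_eq_zero.mp this.symm)
      -- x ⟂ J x
      have hxJx : (inner ℂ x (J x) : ℂ) = 0 := by
        have h1 : (inner ℂ (J (J x)) (J x) : ℂ) = inner ℂ x (J x) := hJinner (J x) x
        rw [hJ2 x, inner_neg_left] at h1
        linear_combination -h1/2
      have hJxx : (inner ℂ (J x) x : ℂ) = 0 := by
        rw [← inner_conj_symm, hxJx, map_zero]
      -- linear independence of x and J x
      have hli : LinearIndependent ℂ ![x, J x] := by
        rw [LinearIndependent.pair_iff]
        intro s t hst
        have h1 : (inner ℂ x (s • x + t • J x) : ℂ) = 0 := by rw [hst, inner_zero_right]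
        rw [inner_add_right, inner_smul_right, inner_smul_right, hxJx, mul_zero,
          add_zero] at h1
        have hs : s = 0 := by
          rcases mul_eq_zero.mp h1 with h | h
          · exact h
          · exact absurd h (inner_self_ne_zero.mpr hx)
        subst hs
        rw [zero_smul, zero_add] at hst
        rcases smul_eq_zero.mp hst with h | h
        · exact ⟨rfl, h⟩
        · exact absurd h hJx
      set W : Submodule ℂ V := Submodule.span ℂ (Set.range ![x, J x]) with hW
      have hWrank : finrank ℂ W = 2 := by
        rw [hW, finrank_span_eq_card hli]
        simp
      have hxW : x ∈ W := Submodule.subset_span ⟨0, rfl⟩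
      have hJxW : J x ∈ W := Submodule.subset_span ⟨1, rfl⟩
      -- J maps Wᗮ to itself
      have hJWperp : ∀ v ∈ Wᗮ, J v ∈ Wᗮ := by
        intro v hv
        rw [Submodule.mem_orthogonal] at hv ⊢
        intro u hu
        induction hu using Submodule.span_induction with
        | mem u hu =>
          obtain ⟨i, rfl⟩ := hu
          fin_cases i
          · -- ⟨x, J v⟩ = 0
            show (inner ℂ x (J v) : ℂ) = 0
            have : (inner ℂ (J v) (J (J x)) : ℂ) = inner ℂ (J x) v := hJinner v (J x)
            rw [hJ2 x, inner_neg_right] at this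
            have h2 : (inner ℂ (J x) v : ℂ) = 0 := hv (J x) hJxW
            rw [← inner_conj_symm]
            rw [h2] at this
            have : (inner ℂ (J v) x : ℂ) = 0 := by linear_combination -this
            rw [this, map_zero]
          · -- ⟨J x, J v⟩ = 0
            show (inner ℂ (J x) (J v) : ℂ) = 0
            rw [hJinner x v]
            have := hv x hxW
            rw [← inner_conj_symm, this, map_zero]
        | zero => simp
        | add u w _ _ hu hw => rw [inner_add_left, hu, hw, add_zero]
        | smul c u _ hu => rw [inner_smul_left, hu, mul_zero]
      -- restrict J to Wᗮ
      let J' : Wᗮ →ₗ⋆[ℂ] Wᗮ :=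
        { toFun := fun v => ⟨J v, hJWperp v v.2⟩
          map_add' := fun a b => by ext; simp
          map_smul' := fun c a => by ext; simp }
      have hJ'inner : ∀ a b : Wᗮ, (inner ℂ (J' a) (J' b) : ℂ) = inner ℂ b a := by
        intro a b
        exact hJinner a b
      have hJ'2 : ∀ a : Wᗮ, J' (J' a) = -a := by
        intro a
        ext
        exact hJ2 a
      have hsum : finrank ℂ W + finrank ℂ Wᗮ = n := by
        rw [← hrank]; exact Submodule.finrank_add_finrank_orthogonal W
      set m := finrank ℂ Wᗮ with hm
      have hmn : m < n := by omega
      have hme : Even m := ih m hmn Wᗮ J' hJ'inner hJ'2 rfl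
      have : n = 2 + m := by omega
      rw [this]
      exact (even_two).add hme

/-- Kramers degeneracy: if `Θ` is an antiunitary operator with `Θ² = -1` on a
finite-dimensional complex Hilbert space, and `P` is an orthogonal projection commuting
with `Θ`, then the rank of `P` is even. -/
theorem even_rank_of_timeReversal_invariant_projection
    {H : Type*} [NormedAddCommGroup H] [InnerProductSpace ℂ H] [FiniteDimensional ℂ H]
    (Θ : H →ₗ⋆[ℂ] H)
    (hΘinner : ∀ x y : H, (inner ℂ (Θ x) (Θ y) : ℂ) = inner ℂ y x)
    (hΘ2 : ∀ x, Θ (Θ x) = -x)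
    (P : H →ₗ[ℂ] H)
    (hPidem : P ∘ₗ P = P)
    (hPsa : ∀ x y : H, (inner ℂ (P x) y : ℂ) = inner ℂ x (P y))
    (hcomm : ∀ x, Θ (P x) = P (Θ x)) :
    Even (Module.finrank ℂ (LinearMap.range P)) := by
  set V := LinearMap.range P with hV
  have hinv : ∀ v ∈ V, Θ v ∈ V := by
    rintro v ⟨y, rfl⟩
    exact ⟨Θ y, (hcomm y).symm⟩
  let J : V →ₗ⋆[ℂ] V :=
    { toFun := fun v => ⟨Θ v, hinv v v.2⟩
      map_add' := fun a b => by ext; simp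
      map_smul' := fun c a => by ext; simp }
  have hJinner : ∀ a b : V, (inner ℂ (J a) (J b) : ℂ) = inner ℂ b a := by
    intro a b
    exact hΘinner a b
  have hJ2 : ∀ a : V, J (J a) = -a := by
    intro a
    ext
    exact hΘ2 a
  exact even_finrank_of_quaternionic (finrank ℂ V) V J hJinner hJ2 rfl
end

section
/- If two orthogonal projections P and Q on a Hilbert space satisfy ‖P - Q‖ < 1, then the Kato–Nagy operator W = (1 - (P-Q)²)^{-1/2} (QP + (1-Q)(1-P)) is unitary and intertwines P and Q: W P W⁻¹ = Q. -/
open StarAlgebra in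
private lemma commute_cfc_of_commute' {A : Type*} [CStarAlgebra A] {a b : A}
    (ha : IsSelfAdjoint a) (h : Commute b a) (f : ℂ → ℂ) :
    Commute b (cfc f a) := by
  have hnorm : IsStarNormal a := ha.isStarNormal
  refine cfc_cases (fun x ↦ Commute b x) a f (Commute.zero_right b) fun hf hna ↦ ?_
  have hmem : cfcHom hna ⟨_, hf.restrict⟩ ∈ elemental ℂ a := by
    rw [cfcHom_eq_of_isStarNormal]
    exact ((continuousFunctionalCalculus a) _).2
  have hclosed : IsClosed {y : A | b * y = y * b} :=
    isClosed_eq (continuous_mul_left b) (continuous_mul_right b)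
  have hsub : (adjoin ℂ ({a} : Set A) : Set A) ⊆ {y | b * y = y * b} := by
    intro y hy
    suffices hgoal : b * y = y * b ∧ b * star y = star y * b from hgoal.1
    induction hy using adjoin_induction with
    | mem x hx =>
      obtain rfl : x = a := hx
      exact ⟨h, by rw [ha.star_eq]; exact h⟩
    | algebraMap r =>
      refine ⟨(Algebra.commutes r b).symm, ?_⟩
      rw [← algebraMap_star_comm]
      exact (Algebra.commutes _ b).symm
    | add x y hx hy ihx ihy =>
      exact ⟨by rw [mul_add, add_mul, ihx.1, ihy.1],
        by rw [star_add, mul_add, add_mul, ihx.2, ihy.2]⟩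
    | mul x y hx hy ihx ihy =>
      refine ⟨by rw [← mul_assoc, ihx.1, mul_assoc, ihy.1, mul_assoc], ?_⟩
      rw [star_mul, ← mul_assoc, ihy.2, mul_assoc, ihx.2, mul_assoc]
    | star x hx ihx => exact ⟨ihx.2, by rw [star_star]; exact ihx.1⟩
  exact closure_minimal hsub hclosed hmem

private lemma commute_sqrt_of_commute' {H : Type*} [NormedAddCommGroup H]
    [InnerProductSpace ℂ H] [CompleteSpace H] {a b : H →L[ℂ] H}
    (ha : 0 ≤ a) (h : Commute b a) : Commute b (CFC.sqrt a) := by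
  rw [CFC.sqrt_eq_cfc, cfc_nnreal_eq_real _ a ha, cfc_real_eq_complex _ (.of_nonneg ha)]
  exact commute_cfc_of_commute' (.of_nonneg ha) h _

set_option synthInstance.maxHeartbeats 1000000 in
private lemma commute_of_commute_sq' {H : Type*} [NormedAddCommGroup H]
    [InnerProductSpace ℂ H] [CompleteSpace H] {a b r : H →L[ℂ] H}
    (hr : 0 ≤ r) (h2 : r * r = a) (h : Commute b a) : Commute b r := by
  have ha : (0 : H →L[ℂ] H) ≤ a := by
    have hsr : a = star r * r := by rw [(IsSelfAdjoint.of_nonneg hr).star_eq, h2]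
    rw [hsr]
    exact star_mul_self_nonneg r
  have key := commute_sqrt_of_commute' ha h
  rwa [CFC.sqrt_unique h2 hr] at key

/-- Kato–Nagy: if two orthogonal projections `P`, `Q` on a Hilbert space satisfy
`‖P - Q‖ < 1`, then `W = (1 - (P-Q)²)^{-1/2} (QP + (1-Q)(1-P))` is unitary and
intertwines `P` and `Q`: `W P = Q W` (i.e. `W P W⁻¹ = Q`). Here `R` denotes the
(unique) positive square root of `1 - (P-Q)²`. -/
theorem katoNagy_unitary_intertwines
    {H : Type*} [NormedAddCommGroup H] [InnerProductSpace ℂ H] [CompleteSpace H]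
    (P Q R : H →L[ℂ] H)
    (hPsa : IsSelfAdjoint P) (hP2 : P * P = P)
    (hQsa : IsSelfAdjoint Q) (hQ2 : Q * Q = Q)
    (hPQ : ‖P - Q‖ < 1)
    (hRpos : R.IsPositive)
    (hR2 : R * R = 1 - (P - Q) * (P - Q)) :
    Ring.inverse R * (Q * P + (1 - Q) * (1 - P)) ∈ unitary (H →L[ℂ] H) ∧
    (Ring.inverse R * (Q * P + (1 - Q) * (1 - P))) * P =
      Q * (Ring.inverse R * (Q * P + (1 - Q) * (1 - P))) := by
  have hP2' : ∀ x : H →L[ℂ] H, P * (P * x) = P * x := fun x => by rw [← mul_assoc, hP2]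
  have hQ2' : ∀ x : H →L[ℂ] H, Q * (Q * x) = Q * x := fun x => by rw [← mul_assoc, hQ2]
  set U := Q * P + (1 - Q) * (1 - P) with hU
  set T := (1 : H →L[ℂ] H) - (P - Q) * (P - Q) with hT
  -- algebraic identities
  have hUP : U * P = Q * U := by
    simp only [hU, mul_sub, sub_mul, mul_add, add_mul, mul_one, one_mul, mul_assoc,
      hP2, hQ2, hP2', hQ2']
    abel
  have hQT : Q * T = T * Q := by
    simp only [hT, mul_sub, sub_mul, mul_add, add_mul, mul_one, one_mul, mul_assoc,
      hP2, hQ2, hP2', hQ2']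
    abel
  have hUstarU : (P * Q + (1 - P) * (1 - Q)) * U = T := by
    simp only [hU, hT, mul_sub, sub_mul, mul_add, add_mul, mul_one, one_mul, mul_assoc,
      hP2, hQ2, hP2', hQ2']
    abel
  have hUUstar : U * (P * Q + (1 - P) * (1 - Q)) = T := by
    simp only [hU, hT, mul_sub, sub_mul, mul_add, add_mul, mul_one, one_mul, mul_assoc,
      hP2, hQ2, hP2', hQ2']
    abel
  have hstarU : star U = P * Q + (1 - P) * (1 - Q) := by
    simp [hU, star_mul, star_add, star_sub, hPsa.star_eq, hQsa.star_eq]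
  have hUT : U * T = T * U := by
    calc U * T = U * ((P * Q + (1 - P) * (1 - Q)) * U) := by rw [hUstarU]
    _ = (U * (P * Q + (1 - P) * (1 - Q))) * U := by rw [mul_assoc]
    _ = T * U := by rw [hUUstar]
  -- positivity and sqrt identification
  have hRsa : IsSelfAdjoint R := hRpos.isSelfAdjoint
  have hRnn : (0 : H →L[ℂ] H) ≤ R := (ContinuousLinearMap.nonneg_iff_isPositive R).mpr hRpos
  have hR2' : R * R = T := hR2
  have hTeq : T = star R * R := by rw [hRsa.star_eq, hR2']
  have hTnn : (0 : H →L[ℂ] H) ≤ T := hTeq ▸ star_mul_self_nonneg R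
  -- invertibility of T and R
  have hXnorm : ‖(P - Q) * (P - Q)‖ < 1 := by
    have h1 := norm_mul_le (P - Q) (P - Q)
    nlinarith [norm_nonneg (P - Q)]
  let uT : (H →L[ℂ] H)ˣ := Units.oneSub _ hXnorm
  have huTval : (uT : H →L[ℂ] H) = T := rfl
  set Ti := ((uT⁻¹ : (H →L[ℂ] H)ˣ) : H →L[ℂ] H) with hTi
  have hTTi : T * Ti = 1 := by rw [← huTval]; exact uT.mul_inv
  have hTiT : Ti * T = 1 := by rw [← huTval]; exact uT.inv_mul
  have hRT : Commute R T := by rw [← hR2']; exact (Commute.refl R).mul_right (Commute.refl R)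
  have hRTu : Commute R (uT : H →L[ℂ] H) := by rw [huTval]; exact hRT
  have hRTi : R * Ti = Ti * R := hRTu.units_inv_right
  let uR : (H →L[ℂ] H)ˣ := ⟨R, Ti * R,
    by rw [← mul_assoc, hRTi, mul_assoc, hR2', hTiT],
    by rw [mul_assoc, hR2', hTiT]⟩
  have huR : IsUnit R := ⟨uR, rfl⟩
  set Ri := Ring.inverse R with hRi
  have hRiR : Ri * R = 1 := Ring.inverse_mul_cancel _ huR
  have hRRi : R * Ri = 1 := Ring.mul_inverse_cancel _ huR
  have hRiSa : star Ri = Ri := by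
    have h1 : star Ri * R = 1 := by
      have := congrArg star hRRi
      rwa [star_mul, hRsa.star_eq, star_one] at this
    calc star Ri = star Ri * (R * Ri) := by rw [hRRi, mul_one]
    _ = (star Ri * R) * Ri := by rw [mul_assoc]
    _ = Ri := by rw [h1, one_mul]
  have hRiTi : Ri = Ti * R := Ring.inverse_unit uR
  have comm_inv : ∀ x : H →L[ℂ] H, x * R = R * x → x * Ri = Ri * x := by
    intro x hx
    have hx' : Commute x (uR : H →L[ℂ] H) := hx
    have := hx'.units_inv_right
    rw [hRiTi]
    exact this
  have hQR : Q * R = R * Q := commute_of_commute_sq' hRnn hR2' (hQT : Commute Q T)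
  have hUR : U * R = R * U := commute_of_commute_sq' hRnn hR2' (hUT : Commute U T)
  have hQRi : Q * Ri = Ri * Q := comm_inv Q hQR
  have hURi : U * Ri = Ri * U := comm_inv U hUR
  have cURi2 : U * (Ri * Ri) = (Ri * Ri) * U :=
    (Commute.mul_right (hURi : Commute U Ri) (hURi : Commute U Ri))
  refine ⟨?_, ?_⟩
  · rw [Unitary.mem_iff]
    have hstarW : star (Ri * U) = star U * Ri := by rw [star_mul, hRiSa]
    constructor
    · rw [hstarW]
      calc star U * Ri * (Ri * U) = star U * (Ri * Ri * U) := by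
            rw [mul_assoc, ← mul_assoc Ri Ri U]
      _ = star U * (U * (Ri * Ri)) := by rw [← cURi2]
      _ = (star U * U) * (Ri * Ri) := by rw [← mul_assoc]
      _ = T * (Ri * Ri) := by rw [hstarU, hUstarU]
      _ = R * R * (Ri * Ri) := by rw [hR2']
      _ = R * (R * Ri) * Ri := by rw [mul_assoc, mul_assoc, mul_assoc]
      _ = 1 := by rw [hRRi, mul_one, hRRi]
    · rw [hstarW]
      calc Ri * U * (star U * Ri) = Ri * (U * star U) * Ri := by
            rw [mul_assoc, mul_assoc, mul_assoc]
      _ = Ri * T * Ri := by rw [hstarU, hUUstar]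
      _ = Ri * (R * R) * Ri := by rw [hR2']
      _ = (Ri * R) * (R * Ri) := by rw [mul_assoc, mul_assoc, mul_assoc]
      _ = 1 := by rw [hRiR, hRRi, mul_one]
  · calc Ri * U * P = Ri * (U * P) := by rw [mul_assoc]
    _ = Ri * (Q * U) := by rw [hUP]
    _ = (Ri * Q) * U := by rw [mul_assoc]
    _ = (Q * Ri) * U := by rw [hQRi]
    _ = Q * (Ri * U) := by rw [mul_assoc]
end
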